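/- Let S be a nontrivial finite commutative local ring and let m ≥ 2 be a natural number. Then the ideals of the quotient ring S[X]/⟨X^m⟩ are totally ordered by inclusion if and only if S is a field. -/

import Mathlib

open Polynomial

/-- For a nontrivial finite commutative local ring `S` and `m ≥ 2`, the ideals of
`S[X]/⟨X^m⟩` are totally ordered by inclusion iff `S` is a field. -/
theorem quotient_Xpow_chainRing_iff_isField {S : Type*} [CommRing S] [Finite S]
    [IsLocalRing S] (m : ℕ) (hm : 2 ≤ m) :
    (∀ I J : Ideal (S[X] ⧸ Ideal.span {(X : S[X]) ^ m}), I ≤ J ∨ J ≤ I) ↔ IsField S := by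
  set Q := S[X] ⧸ Ideal.span {(X : S[X]) ^ m}
  let mk : S[X] →+* Q := Ideal.Quotient.mk _
  constructor
  · intro h
    refine ⟨exists_pair_ne S, mul_comm, ?_⟩
    intro a ha
    have key : IsUnit a := by
      rcases h (Ideal.span {mk (C a)}) (Ideal.span {mk X}) with hle | hle
      · exfalso
        have : mk X ∣ mk (C a) :=
          (Ideal.span_singleton_le_span_singleton).mp hle
        obtain ⟨c, hc⟩ := this
        obtain ⟨p, rfl⟩ := Ideal.Quotient.mk_surjective c
        have : C a - X * p ∈ Ideal.span {(X : S[X]) ^ m} := by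
          rw [← Ideal.Quotient.eq_zero_iff_mem, map_sub, map_mul]
          rw [hc]; ring
        rw [Ideal.mem_span_singleton] at this
        have h0 : (C a - X * p).coeff 0 = 0 :=
          (Polynomial.X_pow_dvd_iff.mp this) 0 (by omega)
        simp [coeff_sub, mul_coeff_zero] at h0
        exact ha h0
      · have : mk (C a) ∣ mk X :=
          (Ideal.span_singleton_le_span_singleton).mp hle
        obtain ⟨c, hc⟩ := this
        obtain ⟨p, rfl⟩ := Ideal.Quotient.mk_surjective c
        have : X - C a * p ∈ Ideal.span {(X : S[X]) ^ m} := by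
          rw [← Ideal.Quotient.eq_zero_iff_mem, map_sub, map_mul]
          rw [hc]; ring
        rw [Ideal.mem_span_singleton] at this
        have h1 : (X - C a * p).coeff 1 = 0 :=
          (Polynomial.X_pow_dvd_iff.mp this) 1 (by omega)
        simp [coeff_sub, coeff_C_mul] at h1
        exact IsUnit.of_mul_eq_one (a := a) (p.coeff 1) (by linear_combination -h1)
    obtain ⟨u, rfl⟩ := key
    exact ⟨(↑u⁻¹ : Sˣ), by simp⟩
  · intro hf
    letI := hf.toField
    intro I J
    have hsurj : Function.Surjective mk := Ideal.Quotient.mk_surjective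
    set I' := Ideal.comap mk I with hI'
    set J' := Ideal.comap mk J with hJ'
    have hXmI : (X : S[X]) ^ m ∈ I' := by
      simp only [hI', Ideal.mem_comap]
      have : mk ((X : S[X]) ^ m) = 0 := by
        rw [Ideal.Quotient.eq_zero_iff_mem]
        exact Ideal.subset_span rfl
      rw [this]; exact I.zero_mem
    have hXmJ : (X : S[X]) ^ m ∈ J' := by
      simp only [hJ', Ideal.mem_comap]
      have : mk ((X : S[X]) ^ m) = 0 := by
        rw [Ideal.Quotient.eq_zero_iff_mem]
        exact Ideal.subset_span rfl
      rw [this]; exact J.zero_mem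
    obtain ⟨p, hp⟩ := (IsPrincipalIdealRing.principal I').principal
    obtain ⟨q, hq⟩ := (IsPrincipalIdealRing.principal J').principal
    rw [Ideal.submodule_span_eq] at hp hq
    have hpd : p ∣ (X : S[X]) ^ m := by
      rw [← Ideal.mem_span_singleton, ← hp]; exact hXmI
    have hqd : q ∣ (X : S[X]) ^ m := by
      rw [← Ideal.mem_span_singleton, ← hq]; exact hXmJ
    obtain ⟨i, hi, hpi⟩ := (dvd_prime_pow Polynomial.prime_X m).mp hpd
    obtain ⟨j, hj, hqj⟩ := (dvd_prime_pow Polynomial.prime_X m).mp hqd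
    have hpspan : I' = Ideal.span {(X : S[X]) ^ i} := by
      rw [hp, Ideal.span_singleton_eq_span_singleton]
      exact hpi
    have hqspan : J' = Ideal.span {(X : S[X]) ^ j} := by
      rw [hq, Ideal.span_singleton_eq_span_singleton]
      exact hqj
    rcases le_total i j with hij | hij
    · right
      rw [← Ideal.comap_le_comap_iff_of_surjective mk hsurj, ← hI', ← hJ',
        hpspan, hqspan, Ideal.span_singleton_le_span_singleton]
      exact pow_dvd_pow X hij
    · left
      rw [← Ideal.comap_le_comap_iff_of_surjective mk hsurj, ← hI', ← hJ',
        hpspan, hqspan, Ideal.span_singleton_le_span_singleton]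
      exact pow_dvd_pow X hij
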